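/- For the regular hexagonal tiling of the plane by congruent regular hexagons of area 1, properly 3-colored so that no two hexagons sharing an edge have the same color, the minimal Euclidean distance between two same-colored points lying in different hexagons equals the side length s of the hexagon, where s = (2/(3√3))^{1/2}; numerically this minimal distance is approximately 0.62, giving fault tolerance approximately 0.31. -/

import Mathlib

/-- The side length of a regular hexagon of area 1: s = (2/(3√3))^{1/2}. -/
noncomputable def hexSide : ℝ := Real.sqrt (2 / (3 * Real.sqrt 3))

/-- The center of the hexagon with lattice coordinates `(m, n)` in the hexagonal tiling. -/
noncomputable def hexCenter (m n : ℤ) : ℝ × ℝ :=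
  (Real.sqrt 3 * hexSide * ((m : ℝ) + (n : ℝ) / 2), 3 * hexSide / 2 * (n : ℝ))

/-- The regular hexagon of side `hexSide` centered at `hexCenter m n`: the intersection of
three slabs of half-width √3·s/2 (the apothem), with normals at angles 0°, 60°, 120°. -/
noncomputable def hexTile (m n : ℤ) : Set (EuclideanSpace ℝ (Fin 2)) :=
  {x | |x 0 - (hexCenter m n).1| ≤ Real.sqrt 3 * hexSide / 2 ∧
       |(x 0 - (hexCenter m n).1) / 2 + Real.sqrt 3 * (x 1 - (hexCenter m n).2) / 2| ≤
          Real.sqrt 3 * hexSide / 2 ∧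
       |(x 0 - (hexCenter m n).1) / 2 - Real.sqrt 3 * (x 1 - (hexCenter m n).2) / 2| ≤
          Real.sqrt 3 * hexSide / 2}

/-- The proper 3-coloring of the hexagonal tiling: no two hexagons sharing an edge get the
same color. -/
def hexColor (m n : ℤ) : ZMod 3 := ((m - n : ℤ) : ZMod 3)

lemma hexSide_pos : 0 < hexSide := by
  have h3 : (0:ℝ) < Real.sqrt 3 := Real.sqrt_pos.mpr (by norm_num)
  exact Real.sqrt_pos.mpr (by positivity)

lemma hex_quad (a b c : ℝ) (hb : |b| ≤ a) (hc : |c| ≤ a) (hbc : |b + c| ≤ a) :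
    b^2 + c^2 + b*c ≤ a^2 := by
  rw [abs_le] at hb hc hbc
  rcases le_total 0 (b*c) with h | h
  · nlinarith
  · rcases le_total 0 (b + c) with h2 | h2
    · rcases le_total 0 b with h3 | h3
      · nlinarith
      · nlinarith
    · rcases le_total 0 b with h3 | h3
      · nlinarith
      · nlinarith

lemma mem_tile_sq {m n : ℤ} {x : EuclideanSpace ℝ (Fin 2)} (hx : x ∈ hexTile m n) :
    (x 0 - (hexCenter m n).1)^2 + (x 1 - (hexCenter m n).2)^2 ≤ hexSide^2 := by
  obtain ⟨h0, h1, h2⟩ := hx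
  set X := x 0 - (hexCenter m n).1 with hX
  set Y := x 1 - (hexCenter m n).2 with hY
  clear_value X Y
  have hs3 : Real.sqrt 3 ^ 2 = 3 := Real.sq_sqrt (by norm_num)
  have h0' : |X/2 + Real.sqrt 3 * Y / 2 + (X/2 - Real.sqrt 3 * Y / 2)| ≤ Real.sqrt 3 * hexSide / 2 := by
    have : X/2 + Real.sqrt 3 * Y / 2 + (X/2 - Real.sqrt 3 * Y / 2) = X := by ring
    rw [this]; exact h0
  have key := hex_quad (Real.sqrt 3 * hexSide / 2) (X/2 + Real.sqrt 3 * Y / 2)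
    (X/2 - Real.sqrt 3 * Y / 2) h1 h2 h0'
  have e1 : (X/2 + Real.sqrt 3 * Y / 2) ^ 2 + (X/2 - Real.sqrt 3 * Y / 2) ^ 2 +
      (X/2 + Real.sqrt 3 * Y / 2) * (X/2 - Real.sqrt 3 * Y / 2) = 3/4 * X^2 + 3/4 * Y^2 := by
    linear_combination (Y^2/4) * hs3
  have e2 : (Real.sqrt 3 * hexSide / 2)^2 = 3/4 * hexSide^2 := by
    linear_combination (hexSide^2/4) * hs3
  rw [e1, e2] at key
  linarith

lemma one_le_sq {z : ℤ} (h : z ≠ 0) : 1 ≤ z^2 := by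
  rcases h.lt_or_gt with h | h <;> nlinarith

lemma int_key (dm dn : ℤ) (hne : ¬(dm = 0 ∧ dn = 0)) (hd : (3:ℤ) ∣ dm - dn) :
    12 ≤ (2*dm + dn)^2 + 3*dn^2 := by
  obtain ⟨k, hk⟩ := hd
  have hdm : dm = dn + 3*k := by omega
  subst hdm
  rcases eq_or_ne dn 0 with rfl | h0
  · have hk0 : k ≠ 0 := by rintro rfl; exact hne ⟨by ring, rfl⟩
    have := one_le_sq hk0
    nlinarith
  · rcases eq_or_ne (dn + 2*k) 0 with h1 | h1
    · have hk0 : k ≠ 0 := by rintro rfl; omega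
      have := one_le_sq hk0
      nlinarith
    · have := one_le_sq h0
      have := one_le_sq h1
      nlinarith

lemma center_sq (m n m' n' : ℤ) :
    ((hexCenter m' n').1 - (hexCenter m n).1)^2 + ((hexCenter m' n').2 - (hexCenter m n).2)^2
      = 3 * hexSide^2 / 4 *
        (((2*(m'-m) + (n'-n) : ℤ) : ℝ)^2 + 3*((n'-n : ℤ):ℝ)^2) := by
  have hs3 : Real.sqrt 3 ^ 2 = 3 := Real.sq_sqrt (by norm_num)
  simp only [hexCenter]
  push_cast
  linear_combination (hexSide^2 * ((m':ℝ) + (n':ℝ)/2 - ((m:ℝ) + (n:ℝ)/2))^2) * hs3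

noncomputable def cpt (m n : ℤ) : EuclideanSpace ℝ (Fin 2) :=
  (WithLp.equiv 2 _).symm ![(hexCenter m n).1, (hexCenter m n).2]

lemma cpt_zero (m n : ℤ) : cpt m n 0 = (hexCenter m n).1 := by simp [cpt]
lemma cpt_one (m n : ℤ) : cpt m n 1 = (hexCenter m n).2 := by simp [cpt]

lemma dist_pt (x y : EuclideanSpace ℝ (Fin 2)) :
    dist x y = Real.sqrt ((x 0 - y 0)^2 + (x 1 - y 1)^2) := by
  rw [EuclideanSpace.dist_eq, Fin.sum_univ_two]
  simp [Real.dist_eq, sq_abs]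

lemma tile_dist {m n : ℤ} {x : EuclideanSpace ℝ (Fin 2)} (hx : x ∈ hexTile m n) :
    dist x (cpt m n) ≤ hexSide := by
  rw [dist_pt, cpt_zero, cpt_one]
  calc Real.sqrt ((x 0 - (hexCenter m n).1)^2 + (x 1 - (hexCenter m n).2)^2)
      ≤ Real.sqrt (hexSide^2) := Real.sqrt_le_sqrt (mem_tile_sq hx)
    _ = hexSide := Real.sqrt_sq hexSide_pos.le

lemma center_dist {m n m' n' : ℤ} (hne : (m, n) ≠ (m', n'))
    (hcol : hexColor m n = hexColor m' n') :
    3 * hexSide ≤ dist (cpt m n) (cpt m' n') := by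
  have hdvd : (3:ℤ) ∣ (m' - m) - (n' - n) := by
    have : ((m - n : ℤ) : ZMod 3) = ((m' - n' : ℤ) : ZMod 3) := hcol
    have h := (ZMod.intCast_eq_intCast_iff _ _ _).mp this
    have := Int.ModEq.dvd h
    omega
  have hne' : ¬((m' - m) = 0 ∧ (n' - n) = 0) := by
    rintro ⟨h1, h2⟩
    exact hne (by simp [Prod.ext_iff]; omega)
  have hk := int_key (m' - m) (n' - n) hne' hdvd
  have hkR : (12:ℝ) ≤ ((2*(m'-m) + (n'-n) : ℤ) : ℝ)^2 + 3*((n'-n : ℤ):ℝ)^2 := by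
    exact_mod_cast hk
  rw [dist_pt, cpt_zero, cpt_one, cpt_zero, cpt_one]
  have hsq : (3 * hexSide)^2 ≤
      ((hexCenter m n).1 - (hexCenter m' n').1)^2 + ((hexCenter m n).2 - (hexCenter m' n').2)^2 := by
    have := center_sq m n m' n'
    nlinarith [sq_nonneg hexSide]
  calc 3 * hexSide = Real.sqrt ((3*hexSide)^2) :=
        (Real.sqrt_sq (by linarith [hexSide_pos])).symm
    _ ≤ _ := Real.sqrt_le_sqrt hsq

lemma lower_bound {m n m' n' : ℤ} (hne : (m, n) ≠ (m', n'))
    (hcol : hexColor m n = hexColor m' n')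
    {x y : EuclideanSpace ℝ (Fin 2)} (hx : x ∈ hexTile m n) (hy : y ∈ hexTile m' n') :
    hexSide ≤ dist x y := by
  have h4 := dist_triangle4 (cpt m n) x y (cpt m' n')
  have h1 : dist (cpt m n) x ≤ hexSide := by rw [dist_comm]; exact tile_dist hx
  have h2 : dist y (cpt m' n') ≤ hexSide := tile_dist hy
  have h3 := center_dist hne hcol
  linarith

lemma achieved : hexSide ∈ {d : ℝ | ∃ m n m' n' : ℤ, (m, n) ≠ (m', n') ∧
        hexColor m n = hexColor m' n' ∧
        ∃ x ∈ hexTile m n, ∃ y ∈ hexTile m' n', d = dist x y} := by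
  have hs := hexSide_pos
  have h3 : (0:ℝ) < Real.sqrt 3 := Real.sqrt_pos.mpr (by norm_num)
  refine ⟨0, 0, -1, 2, by decide, by decide, ?_⟩
  refine ⟨(WithLp.equiv 2 _).symm ![0, hexSide], ⟨?_, ?_, ?_⟩,
    (WithLp.equiv 2 _).symm ![0, 2*hexSide], ⟨?_, ?_, ?_⟩, ?_⟩ <;>
    simp [hexCenter]
  case refine_1 => nlinarith [mul_pos h3 hs]
  case refine_4 => nlinarith [mul_pos h3 hs]
  case refine_2 => rw [abs_le]; constructor <;> nlinarith [mul_pos h3 hs]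
  case refine_3 => rw [abs_le]; constructor <;> nlinarith [mul_pos h3 hs]
  case refine_5 => rw [abs_le]; constructor <;> nlinarith [mul_pos h3 hs]
  case refine_6 => rw [abs_le]; constructor <;> nlinarith [mul_pos h3 hs]
  case refine_7 =>
    rw [dist_pt]
    simp only [WithLp.equiv_symm_apply, PiLp.toLp_apply, Matrix.cons_val_zero, Matrix.cons_val_one,
      Matrix.head_cons]
    rw [show ((0:ℝ)-0)^2 + (hexSide - 2*hexSide)^2 = hexSide^2 by ring]
    exact (Real.sqrt_sq hs.le).symm

/-- For the regular hexagonal tiling of the plane by regular hexagons of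
area 1, properly 3-colored, the minimal Euclidean distance between two same-colored points
lying in different hexagons equals the side length s = (2/(3√3))^{1/2} of the hexagon. -/
theorem stmt_7 :
    IsLeast {d : ℝ | ∃ m n m' n' : ℤ, (m, n) ≠ (m', n') ∧
        hexColor m n = hexColor m' n' ∧
        ∃ x ∈ hexTile m n, ∃ y ∈ hexTile m' n', d = dist x y} hexSide := by
  constructor
  · exact achieved
  · rintro d ⟨m, n, m', n', hne, hcol, x, hx, y, hy, rfl⟩
    exact lower_bound hne hcol hx hy
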